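/- Let γ > 0. If α̃ in the nonnegative orthant is a global maximizer of the penalized objective S over the nonnegative orthant, then α̃ satisfies the fixed-point equation α̃_j = α̃_j · (Lᵀ(d ⊙ exp(−Lα̃)))_j / ( (LᵀP)_j + 2γ·α̃_j ) for every j = 1,…,M such that (LᵀP)_j + 2γ·α̃_j > 0; equivalently, α̃_j · ( (LᵀP)_j + 2γ·α̃_j ) = α̃_j · (Lᵀ(d ⊙ exp(−Lα̃)))_j for every j. -/

import Mathlib

/-- The Poisson log-likelihood for the Raman lidar inverse problem. -/
noncomputable def lidarLogLik {N M : ℕ} (L : Matrix (Fin N) (Fin M) ℝ)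
    (d : Fin N → ℝ) (P : Fin N → ℕ) (α : Fin M → ℝ) : ℝ :=
  ∑ i, ((P i : ℝ) * Real.log (d i) - (L.mulVec α i) * (P i : ℝ)
    - d i * Real.exp (-(L.mulVec α i)) - Real.log (Nat.factorial (P i)))

/-- The penalized objective `S(α) = l(α) − γ‖α‖₂²`. -/
noncomputable def lidarPenalized {N M : ℕ} (L : Matrix (Fin N) (Fin M) ℝ)
    (d : Fin N → ℝ) (P : Fin N → ℕ) (γ : ℝ) (α : Fin M → ℝ) : ℝ :=
  lidarLogLik L d P α - γ * ∑ j, (α j) ^ 2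

/-- Let `γ > 0`. If `α̃` in the nonnegative orthant is a global maximizer of the penalized
objective `S` over the nonnegative orthant, then it satisfies the fixed-point equation
`α̃_j = α̃_j (Lᵀ(d ⊙ exp(−Lα̃)))_j / ((LᵀP)_j + 2γ α̃_j)` for every `j` with
`(LᵀP)_j + 2γ α̃_j > 0`; equivalently
`α̃_j ((LᵀP)_j + 2γ α̃_j) = α̃_j (Lᵀ(d ⊙ exp(−Lα̃)))_j` for every `j`. -/
lemma lidar_key {N M : ℕ}
    (L : Matrix (Fin N) (Fin M) ℝ) (d : Fin N → ℝ)
    (P : Fin N → ℕ) (γ : ℝ)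
    (a : Fin M → ℝ) (ha : ∀ j, 0 ≤ a j)
    (hmax : ∀ α : Fin M → ℝ, (∀ j, 0 ≤ α j) →
      (lidarLogLik L d P α - γ * ∑ j, (α j) ^ 2) ≤
        (lidarLogLik L d P a - γ * ∑ j, (a j) ^ 2))
    (j : Fin M) (hj : 0 < a j) :
    (∑ i, L i j * (P i : ℝ)) + 2 * γ * a j
      = ∑ i, L i j * (d i * Real.exp (-(L.mulVec a i))) := by
  classical
  set F : ℝ → ℝ := fun t =>
    (∑ i, ((P i : ℝ) * Real.log (d i) - (L.mulVec a i + t * L i j) * (P i : ℝ)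
      - d i * Real.exp (-(L.mulVec a i + t * L i j)) - Real.log (Nat.factorial (P i))))
    - γ * ((∑ k, (a k) ^ 2) - (a j) ^ 2 + (a j + t) ^ 2) with hF
  have hmul : ∀ t : ℝ, ∀ i, L.mulVec (Function.update a j (a j + t)) i
      = L.mulVec a i + t * L i j := by
    intro t i
    simp only [Matrix.mulVec, dotProduct]
    have h1 : ∀ k : Fin M, L i k * Function.update a j (a j + t) k
        = L i k * a k + (if k = j then t * L i j else 0) := by
      intro k
      by_cases h : k = j
      · subst h; simp [Function.update_self]; ring
      · rw [Function.update_of_ne h, if_neg h]; ring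
    rw [Finset.sum_congr rfl (fun k _ => h1 k), Finset.sum_add_distrib,
      Finset.sum_ite_eq' Finset.univ j]
    simp [dotProduct]
  have hsq : ∀ t : ℝ, (∑ k, (Function.update a j (a j + t) k) ^ 2)
      = (∑ k, (a k) ^ 2) - (a j) ^ 2 + (a j + t) ^ 2 := by
    intro t
    have h1 : ∀ k : Fin M, (Function.update a j (a j + t) k) ^ 2
        = (a k) ^ 2 + (if k = j then (a j + t) ^ 2 - (a j) ^ 2 else 0) := by
      intro k
      by_cases h : k = j
      · subst h; simp [Function.update_self]
      · rw [Function.update_of_ne h, if_neg h]; ring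
    rw [Finset.sum_congr rfl (fun k _ => h1 k), Finset.sum_add_distrib,
      Finset.sum_ite_eq' Finset.univ j]
    simp; ring
  have hFval : ∀ t : ℝ, F t = lidarLogLik L d P (Function.update a j (a j + t))
      - γ * ∑ k, (Function.update a j (a j + t) k) ^ 2 := by
    intro t
    simp only [hF, lidarLogLik, hmul t, hsq t]
  have hF0 : F 0 = lidarLogLik L d P a - γ * ∑ k, (a k) ^ 2 := by
    rw [hFval 0]
    simp [Function.update_eq_self]
  have hloc : IsLocalMax F 0 := by
    have hmem : Set.Ioo (-(a j)) (a j) ∈ nhds (0 : ℝ) :=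
      Ioo_mem_nhds (by linarith) hj
    filter_upwards [hmem] with t ht
    rw [hFval t, hF0]
    apply hmax
    intro k
    by_cases h : k = j
    · subst h; simp [Function.update_self]; linarith [ht.1]
    · simp [Function.update_of_ne h]; exact ha k
  -- derivative
  have hder : HasDerivAt F
      ((∑ i, (-(L i j * (P i : ℝ)) + d i * (Real.exp (-(L.mulVec a i)) * L i j)))
        - γ * (2 * a j)) 0 := by
    have hsum : HasDerivAt (fun t : ℝ => ∑ i, ((P i : ℝ) * Real.log (d i)
        - (L.mulVec a i + t * L i j) * (P i : ℝ)
        - d i * Real.exp (-(L.mulVec a i + t * L i j)) - Real.log (Nat.factorial (P i))))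
        (∑ i, (-(L i j * (P i : ℝ)) + d i * (Real.exp (-(L.mulVec a i)) * L i j))) 0 := by
      apply HasDerivAt.fun_sum
      intro i _
      have h1 : HasDerivAt (fun t : ℝ => L.mulVec a i + t * L i j) (L i j) 0 :=
        (hasDerivAt_mul_const (L i j)).const_add _
      have h2 : HasDerivAt (fun t : ℝ => Real.exp (-(L.mulVec a i + t * L i j)))
          (Real.exp (-(L.mulVec a i + 0 * L i j)) * (-(L i j))) 0 := h1.neg.exp
      have h3 := (((hasDerivAt_const (0:ℝ) ((P i : ℝ) * Real.log (d i))).sub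
          (h1.mul_const (P i : ℝ))).sub (h2.const_mul (d i))).sub
          (hasDerivAt_const (0:ℝ) (Real.log (Nat.factorial (P i))))
      convert h3 using 1
      · funext y; simp only [Pi.sub_apply]
      · rw [zero_mul, add_zero]; ring
    have hq : HasDerivAt (fun t : ℝ => (∑ k, (a k) ^ 2) - (a j) ^ 2 + (a j + t) ^ 2)
        (2 * a j) 0 := by
      have h := (((hasDerivAt_id (0:ℝ)).const_add (a j)).pow 2).const_add
        ((∑ k, (a k) ^ 2) - (a j) ^ 2)
      simpa using h
    exact hsum.sub (hq.const_mul γ)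
  have hzero := hloc.hasDerivAt_eq_zero hder
  have hexp : (∑ i, (-(L i j * (P i : ℝ)) + d i * (Real.exp (-(L.mulVec a i)) * L i j)))
      = (∑ i, L i j * (d i * Real.exp (-(L.mulVec a i)))) - ∑ i, L i j * (P i : ℝ) := by
    rw [← Finset.sum_sub_distrib]
    apply Finset.sum_congr rfl
    intro i _
    ring
  rw [hexp] at hzero
  linarith

theorem stmt_17 {N M : ℕ} (hN : 0 < N) (hM : 0 < M)
    (L : Matrix (Fin N) (Fin M) ℝ) (d : Fin N → ℝ) (hd : ∀ i, 0 < d i)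
    (P : Fin N → ℕ) (γ : ℝ) (hγ : 0 < γ)
    (a : Fin M → ℝ) (ha : ∀ j, 0 ≤ a j)
    (hmax : ∀ α : Fin M → ℝ, (∀ j, 0 ≤ α j) →
      lidarPenalized L d P γ α ≤ lidarPenalized L d P γ a) :
    (∀ j : Fin M, 0 < (∑ i, L i j * (P i : ℝ)) + 2 * γ * a j →
      a j = a j * (∑ i, L i j * (d i * Real.exp (-(L.mulVec a i)))) /
        ((∑ i, L i j * (P i : ℝ)) + 2 * γ * a j)) ∧
    (∀ j : Fin M,
      a j * ((∑ i, L i j * (P i : ℝ)) + 2 * γ * a j) =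
        a j * (∑ i, L i j * (d i * Real.exp (-(L.mulVec a i))))) := by
  have key : ∀ j : Fin M,
      a j * ((∑ i, L i j * (P i : ℝ)) + 2 * γ * a j) =
        a j * (∑ i, L i j * (d i * Real.exp (-(L.mulVec a i)))) := by
    intro j
    rcases eq_or_lt_of_le (ha j) with h | h
    · rw [← h]; ring
    · rw [lidar_key L d P γ a ha (fun α hα => by simpa [lidarPenalized] using hmax α hα) j h]
  refine ⟨?_, key⟩
  intro j hpos
  have hk := key j
  rw [eq_div_iff (ne_of_gt hpos)]
  exact hk
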